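/- Let G be a finite group and x ∈ G. Then the subgroup ⟨x, y⟩ is nilpotent for every y ∈ G if and only if x lies in the hypercentre of G, i.e., there exists a natural number k such that x belongs to the k-th term Z^k(G) of the upper central series of G. -/

import Mathlib

open SimpleGraph

/-- The power graph of a group: distinct `x`,`y` adjacent iff one is a power of the other. -/
def powGraph (G : Type*) [Group G] : SimpleGraph G where
  Adj x y := x ≠ y ∧ (x ∈ Subgroup.zpowers y ∨ y ∈ Subgroup.zpowers x)
  symm := ⟨fun _ _ h => ⟨h.1.symm, h.2.symm⟩⟩
  loopless := ⟨fun _ h => h.1 rfl⟩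

/-- The enhanced power graph of a group: distinct `x`,`y` adjacent iff `⟨x,y⟩` is cyclic. -/
def epowGraph (G : Type*) [Group G] : SimpleGraph G where
  Adj x y := x ≠ y ∧ IsCyclic (Subgroup.closure ({x, y} : Set G))
  symm := by
    refine ⟨fun x y h => ?_⟩
    beta_reduce at h ⊢
    refine ⟨h.1.symm, ?_⟩
    rw [Set.pair_comm]
    exact h.2
  loopless := ⟨fun _ h => h.1 rfl⟩

/-- The commuting graph of a group: distinct `x`,`y` adjacent iff `x*y = y*x`. -/
def comGraph (G : Type*) [Group G] : SimpleGraph G where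
  Adj x y := x ≠ y ∧ Commute x y
  symm := ⟨fun _ _ h => ⟨h.1.symm, h.2.symm⟩⟩
  loopless := ⟨fun _ h => h.1 rfl⟩

/-- The non-generating graph of a group: distinct `x`,`y` adjacent iff `⟨x,y⟩ ≠ G`. -/
def ngenGraph (G : Type*) [Group G] : SimpleGraph G where
  Adj x y := x ≠ y ∧ Subgroup.closure ({x, y} : Set G) ≠ ⊤
  symm := by
    refine ⟨fun x y h => ?_⟩
    beta_reduce at h ⊢
    refine ⟨h.1.symm, ?_⟩
    rw [Set.pair_comm]
    exact h.2
  loopless := ⟨fun _ h => h.1 rfl⟩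

/-- The generating graph of a group: distinct `x`,`y` adjacent iff `⟨x,y⟩ = G`. -/
def genGraph (G : Type*) [Group G] : SimpleGraph G where
  Adj x y := x ≠ y ∧ Subgroup.closure ({x, y} : Set G) = ⊤
  symm := by
    refine ⟨fun x y h => ?_⟩
    beta_reduce at h ⊢
    refine ⟨h.1.symm, ?_⟩
    rw [Set.pair_comm]
    exact h.2
  loopless := ⟨fun _ h => h.1 rfl⟩

section NilpotentHypercentreAux
open Subgroup

universe u
variable {G : Type u} [Group G]

lemma aux_mem_ucs_subgroup (H : Subgroup G) :
    ∀ (k : ℕ) (h : H), (h : G) ∈ Subgroup.upperCentralSeries G k → h ∈ Subgroup.upperCentralSeries H k := by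
  intro k
  induction k with
  | zero =>
    intro h hh
    simp only [Subgroup.upperCentralSeries_zero, Subgroup.mem_bot] at hh ⊢
    exact Subtype.ext hh
  | succ n ih =>
    intro h hh
    rw [Subgroup.mem_upperCentralSeries_succ_iff] at hh ⊢
    intro y
    exact ih _ (hh (y : G))

/-- A group generated by two elements, one of which is in the upper central series,
is nilpotent. -/

lemma aux_nilpotent_of_gen : ∀ (k : ℕ) (H : Type u) [Group H] (a b : H),
    Subgroup.closure ({a, b} : Set H) = ⊤ → a ∈ Subgroup.upperCentralSeries H k →
    Group.IsNilpotent H := by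
  intro k
  induction k with
  | zero =>
    intro H _ a b hab ha
    simp only [Subgroup.upperCentralSeries_zero, Subgroup.mem_bot] at ha
    have hcyc : IsCyclic H := by
      refine ⟨⟨b, fun h => ?_⟩⟩
      have : (⊤ : Subgroup H) ≤ Subgroup.zpowers b := by
        rw [← hab]
        refine (Subgroup.closure_le _).mpr ?_
        intro t ht
        simp only [Set.mem_insert_iff, Set.mem_singleton_iff] at ht
        rcases ht with h1 | h1
        · rw [h1, ha]; exact Subgroup.one_mem _
        · rw [h1]; exact Subgroup.mem_zpowers b
      exact this (Subgroup.mem_top h)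
    letI := hcyc.commGroup
    infer_instance
  | succ n ih =>
    intro H _ a b hab ha
    apply of_quotient_center_nilpotent
    refine ih (H ⧸ Subgroup.center H) (QuotientGroup.mk a) (QuotientGroup.mk b) ?_ ?_
    · have : Subgroup.closure (((QuotientGroup.mk' (Subgroup.center H)) : H →* H ⧸ Subgroup.center H) '' ({a, b} : Set H)) = ⊤ := by
        rw [← MonoidHom.map_closure, hab]
        exact Subgroup.map_top_of_surjective _ (QuotientGroup.mk'_surjective _)
      rw [Set.image_insert_eq, Set.image_singleton] at this
      exact this
    · have := Subgroup.comap_upperCentralSeries_quotient_center (G := H) n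
      rw [← this] at ha
      exact ha

lemma aux_split (g : G) {m n : ℕ} (h : orderOf g ∣ m * n) (hmn : Nat.Coprime m n) :
    ∃ a b : G, a ∈ zpowers g ∧ b ∈ zpowers g ∧ g = a * b ∧ a ^ m = 1 ∧ b ^ n = 1 := by
  have hcop : IsCoprime (m : ℤ) (n : ℤ) := Int.isCoprime_iff_gcd_eq_one.mpr hmn
  obtain ⟨U, V, hUV⟩ := hcop
  have h1 : g ^ ((m * n : ℕ) : ℤ) = 1 := by
    rw [zpow_natCast, orderOf_dvd_iff_pow_eq_one.mp h]
  refine ⟨g ^ (V * n), g ^ (U * m), zpow_mem (mem_zpowers g) _, zpow_mem (mem_zpowers g) _, ?_, ?_, ?_⟩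
  · have h2 : V * (n : ℤ) + U * m = 1 := by linarith
    rw [← zpow_add, h2, zpow_one]
  · have h3 : (g ^ (V * n)) ^ (m : ℤ) = (g ^ ((m * n : ℕ) : ℤ)) ^ V := by
      rw [← zpow_mul, ← zpow_mul]
      congr 1
      push_cast
      ring
    rw [← zpow_natCast (g ^ (V * (n:ℤ))) m, h3, h1, one_zpow]
  · have h3 : (g ^ (U * m)) ^ (n : ℤ) = (g ^ ((m * n : ℕ) : ℤ)) ^ U := by
      rw [← zpow_mul, ← zpow_mul]
      congr 1
      push_cast
      ring
    rw [← zpow_natCast (g ^ (U * (m:ℤ))) n, h3, h1, one_zpow]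

/-- In a finite nilpotent group, elements of coprime prime power order commute. -/

lemma aux_commute_nilpotent [Finite G] [Group.IsNilpotent G] {p q : ℕ} (hp : p.Prime)
    (hq : q.Prime) (hpq : p ≠ q) (a b : G) {i j : ℕ} (ha : a ^ p ^ i = 1) (hb : b ^ q ^ j = 1) :
    Commute a b := by
  haveI : Fact p.Prime := ⟨hp⟩
  haveI : Fact q.Prime := ⟨hq⟩
  have hsyl : ∀ (r : ℕ) (_hr : Fact r.Prime) (P : Sylow r G), (↑P : Subgroup G).Normal :=
    ((isNilpotent_of_finite_tfae (G := G)).out 0 3).mp ‹_›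
  have hpga : IsPGroup p (zpowers a) := by
    intro ⟨g, hg⟩
    obtain ⟨m, rfl⟩ := hg
    refine ⟨i, Subtype.ext ?_⟩
    push_cast
    rw [← zpow_natCast (a ^ m), ← zpow_mul, mul_comm, zpow_mul, zpow_natCast, ha, one_zpow]
  have hpgb : IsPGroup q (zpowers b) := by
    intro ⟨g, hg⟩
    obtain ⟨m, rfl⟩ := hg
    refine ⟨j, Subtype.ext ?_⟩
    push_cast
    rw [← zpow_natCast (b ^ m), ← zpow_mul, mul_comm, zpow_mul, zpow_natCast, hb, one_zpow]
  obtain ⟨P, hP⟩ := hpga.exists_le_sylow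
  obtain ⟨Q, hQ⟩ := hpgb.exists_le_sylow
  have hdisj : Disjoint (P : Subgroup G) (Q : Subgroup G) := by
    rw [Subgroup.disjoint_def]
    intro g hgP hgQ
    obtain ⟨s, hs⟩ := P.2 ⟨g, hgP⟩
    obtain ⟨t, ht⟩ := Q.2 ⟨g, hgQ⟩
    have hs' : g ^ p ^ s = 1 := by
      have := congrArg (Subgroup.subtype _) hs
      simpa using this
    have ht' : g ^ q ^ t = 1 := by
      have := congrArg (Subgroup.subtype _) ht
      simpa using this
    have h1 : orderOf g ∣ p ^ s := orderOf_dvd_iff_pow_eq_one.mpr hs'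
    have h2 : orderOf g ∣ q ^ t := orderOf_dvd_iff_pow_eq_one.mpr ht'
    have hcop : Nat.Coprime (p ^ s) (q ^ t) :=
      Nat.Coprime.pow s t ((Nat.coprime_primes hp hq).mpr hpq)
    have : orderOf g = 1 := Nat.eq_one_of_dvd_coprimes hcop h1 h2
    exact orderOf_eq_one_iff.mp this
  exact Subgroup.commute_of_normal_of_disjoint _ _ (hsyl p ‹_› P) (hsyl q ‹_› Q) hdisj
    a b (hP (mem_zpowers a)) (hQ (mem_zpowers b))

lemma aux_nilpotent_of_le {H K : Subgroup G} (hKH : K ≤ H) (h : Group.IsNilpotent H) :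
    Group.IsNilpotent K := by
  haveI := h
  exact nilpotent_of_mulEquiv (Subgroup.subgroupOfEquivOfLe hKH)


lemma aux_closure_pair (x y : G) :
    Subgroup.closure ({⟨x, Subgroup.subset_closure (by simp)⟩,
      ⟨y, Subgroup.subset_closure (by simp)⟩} :
      Set (Subgroup.closure ({x, y} : Set G))) = ⊤ := by
  have key := Subgroup.closure_closure_coe_preimage (k := ({x, y} : Set G))
  have hset : (((↑) : Subgroup.closure ({x, y} : Set G) → G) ⁻¹' ({x, y} : Set G)) =
      ({⟨x, Subgroup.subset_closure (by simp)⟩, ⟨y, Subgroup.subset_closure (by simp)⟩} :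
      Set (Subgroup.closure ({x, y} : Set G))) := by
    ext ⟨g, hg⟩
    simp [Subtype.ext_iff]
  rw [hset] at key
  exact key

lemma aux_commute_of_dominant [Finite G] (x : G)
    (hx : ∀ y : G, Group.IsNilpotent (Subgroup.closure ({x, y} : Set G)))
    {p : ℕ} (hp : p.Prime) {k : ℕ} (hxo : x ^ p ^ k = 1) :
    ∀ y : G, ¬ p ∣ orderOf y → Commute x y := by
  suffices H : ∀ (n : ℕ) (y : G), orderOf y = n → ¬ p ∣ n → Commute x y by
    intro y hy; exact H _ y rfl hy
  intro n
  induction n using Nat.strong_induction_on with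
  | _ n ih =>
    intro y hyn hpn
    rcases eq_or_ne n 1 with rfl | hn1
    · rw [orderOf_eq_one_iff.mp hyn]; exact Commute.one_right x
    have hn0 : n ≠ 0 := by rw [← hyn]; exact (orderOf_pos y).ne'
    have hqp : n.minFac.Prime := Nat.minFac_prime hn1
    set q := n.minFac with hqdef
    have hqn : q ∣ n := Nat.minFac_dvd n
    have hqne : q ≠ p := by rintro rfl; exact hpn hqn
    set a := n.factorization q with hadef
    set m := ordCompl[q] n with hmdef
    have hsplit : n = q ^ a * m := (Nat.ordProj_mul_ordCompl_eq_self n q).symm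
    have hcop : Nat.Coprime (q ^ a) m :=
      Nat.Coprime.pow_left a (Nat.coprime_ordCompl hqp hn0)
    have hdvd : orderOf y ∣ q ^ a * m := by rw [hyn, ← hsplit]
    obtain ⟨u, v, hu, hv, hyuv, huq, hvm⟩ := aux_split y hdvd hcop
    -- x commutes with u
    have hmemu : u ∈ Subgroup.closure ({x, y} : Set G) := by
      obtain ⟨t, rfl⟩ := hu
      exact zpow_mem (Subgroup.subset_closure (by simp)) t
    have hle : Subgroup.closure ({x, u} : Set G) ≤ Subgroup.closure ({x, y} : Set G) := by
      refine (Subgroup.closure_le _).mpr ?_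
      intro g hg
      simp only [Set.mem_insert_iff, Set.mem_singleton_iff] at hg
      rcases hg with h1 | h1
      · rw [h1]; exact Subgroup.subset_closure (by simp)
      · rw [h1]; exact hmemu
    haveI hnil : Group.IsNilpotent (Subgroup.closure ({x, u} : Set G)) :=
      aux_nilpotent_of_le hle (hx y)
    have hxu : Commute x u := by
      set H := Subgroup.closure ({x, u} : Set G)
      have hxH : x ∈ H := Subgroup.subset_closure (by simp)
      have huH : u ∈ H := Subgroup.subset_closure (by simp)
      have hcomm : Commute (⟨x, hxH⟩ : H) (⟨u, huH⟩ : H) := by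
        refine aux_commute_nilpotent hp hqp hqne.symm (⟨x, hxH⟩ : H) (⟨u, huH⟩ : H) (i := k) (j := a) ?_ ?_
        · apply Subtype.ext
          push_cast
          exact hxo
        · apply Subtype.ext
          push_cast
          exact huq
      have := congrArg (fun z : H => (z : G)) hcomm
      exact this
    -- x commutes with v
    have hvo : orderOf v ∣ m := orderOf_dvd_iff_pow_eq_one.mpr hvm
    have hmpos : 0 < m := Nat.ordCompl_pos q hn0
    have hmlt : m < n := by
      rw [hmdef]
      apply Nat.div_lt_self (Nat.pos_of_ne_zero hn0)
      exact Nat.one_lt_pow (Nat.Prime.factorization_pos_of_dvd hqp hn0 hqn).ne' hqp.one_lt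
    have hxv : Commute x v := by
      refine ih (orderOf v) (lt_of_le_of_lt (Nat.le_of_dvd hmpos hvo) hmlt) v rfl ?_
      intro hpv
      exact hpn (hpv.trans (hvo.trans (Nat.ordCompl_dvd n q)))
    rw [hyuv]
    exact hxu.mul_right hxv

end NilpotentHypercentreAux

section NilpotentHypercentreAux2
open Subgroup
lemma aux_pelem_hypercentral : ∀ (n : ℕ) (G : Type u) [Group G] [Finite G],
    Nat.card G ≤ n → ∀ (p : ℕ), p.Prime → ∀ (x : G) (k : ℕ), x ^ p ^ k = 1 →
    (∀ y : G, ¬ p ∣ orderOf y → Commute x y) → ∃ m, x ∈ Subgroup.upperCentralSeries G m := by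
  intro n
  induction n with
  | zero =>
    intro G _ _ hn
    have : 0 < Nat.card G := Nat.card_pos
    omega
  | succ n ih =>
    intro G _ _ hn p hp x k hxo hc
    haveI : Fact p.Prime := ⟨hp⟩
    by_cases hx1 : x = 1
    · refine ⟨0, ?_⟩
      rw [Subgroup.upperCentralSeries_zero, Subgroup.mem_bot]
      exact hx1
    -- conjugation preserves order
    have horder : ∀ (g t : G), orderOf (g * t * g⁻¹) = orderOf t := by
      intro g t
      have h1 := orderOf_injective (MulAut.conj g).toMonoidHom (MulAut.conj g).injective t
      simpa using h1
    set S : Set G := {y : G | ¬ p ∣ orderOf y} with hSdef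
    set K : Subgroup G := Subgroup.closure S with hKdef
    have hKn : K.Normal := by
      constructor
      intro a ha g
      have hmap : K.map (MulAut.conj g).toMonoidHom = K := by
        rw [hKdef, MonoidHom.map_closure]
        congr 1
        ext t
        constructor
        · rintro ⟨s, hs, rfl⟩
          show ¬ p ∣ orderOf ((MulAut.conj g) s)
          rw [MulAut.conj_apply, horder]
          exact hs
        · intro ht
          refine ⟨g⁻¹ * t * g, ?_, ?_⟩
          · show ¬ p ∣ orderOf (g⁻¹ * t * g)
            have : g⁻¹ * t * g = g⁻¹ * t * g⁻¹⁻¹ := by rw [inv_inv]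
            rw [this, horder]
            exact ht
          · simp only [MulEquiv.coe_toMonoidHom, MulAut.conj_apply]
            group
      have hmm : g * a * g⁻¹ ∈ K.map (MulAut.conj g).toMonoidHom :=
        Subgroup.mem_map.mpr ⟨a, ha, by simp [MulAut.conj_apply]⟩
      rwa [hmap] at hmm
    have hKcent : K ≤ Subgroup.centralizer {x} := by
      rw [hKdef]
      refine (Subgroup.closure_le _).mpr ?_
      intro s hs
      rw [SetLike.mem_coe, Subgroup.mem_centralizer_iff]
      intro h hh
      rw [Set.mem_singleton_iff] at hh
      subst hh
      exact hc s hs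
    have hxK : ∀ g ∈ K, Commute x g := by
      intro g hg
      exact (Subgroup.mem_centralizer_iff.mp (hKcent hg)) x rfl
    have hGK : IsPGroup p (G ⧸ K) := by
      intro qq
      refine QuotientGroup.induction_on qq ?_
      intro g
      refine ⟨(orderOf g).factorization p, ?_⟩
      rw [← QuotientGroup.mk_pow, QuotientGroup.eq_one_iff]
      apply Subgroup.subset_closure
      show ¬ p ∣ orderOf (g ^ p ^ (orderOf g).factorization p)
      rw [orderOf_pow]
      have hgcd : Nat.gcd (orderOf g) (p ^ (orderOf g).factorization p) =
          p ^ (orderOf g).factorization p :=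
        Nat.gcd_eq_right (Nat.ordProj_dvd _ _)
      rw [hgcd]
      exact Nat.not_dvd_ordCompl hp (orderOf_pos g).ne'
    set C : Subgroup G := Subgroup.centralizer (K : Set G) with hCdef
    have hCn : C.Normal := by
      constructor
      intro c hcC g
      rw [hCdef, Subgroup.mem_centralizer_iff] at hcC ⊢
      intro h hh
      have h' : g⁻¹ * h * g ∈ K := by
        have := hKn.conj_mem h hh g⁻¹
        simpa using this
      have h2 := hcC _ h'
      have h3 := congrArg (fun w => g * w * g⁻¹) h2
      simpa [mul_assoc] using h3
    have hxC : x ∈ C := by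
      rw [hCdef, Subgroup.mem_centralizer_iff]
      intro h hh
      exact (hxK h hh).symm
    -- Sylow p-subgroup containing x
    have hpgx : IsPGroup p (zpowers x) := by
      intro ⟨g, hg⟩
      obtain ⟨m, rfl⟩ := hg
      refine ⟨k, Subtype.ext ?_⟩
      push_cast
      rw [← zpow_natCast (x ^ m), ← zpow_mul, mul_comm, zpow_mul, zpow_natCast, hxo, one_zpow]
    obtain ⟨P, hxP⟩ := hpgx.exists_le_sylow
    have hxP' : x ∈ (P : Subgroup G) := hxP (mem_zpowers x)
    haveI := hCn
    set N : Subgroup ↥(P : Subgroup G) := C.subgroupOf (P : Subgroup G) with hNdef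
    haveI hNnormal : N.Normal := Subgroup.normal_subgroupOf
    set xP : ↥(P : Subgroup G) := ⟨x, hxP'⟩ with hxPdef
    have hxN : xP ∈ N := by
      rw [hNdef, Subgroup.mem_subgroupOf]
      exact hxC
    haveI : Nontrivial ↥N := by
      refine ⟨⟨⟨xP, hxN⟩, 1, ?_⟩⟩
      intro hcon
      apply hx1
      have h1 : xP = 1 := by
        have := congrArg (fun z : ↥N => (z : ↥(P : Subgroup G))) hcon
        simpa using this
      have := congrArg (fun z : ↥(P : Subgroup G) => (z : G)) h1
      exact this
    have hNp : IsPGroup p ↥N := IsPGroup.to_subgroup P.2 N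
    have hpdvd : p ∣ Nat.card ↥N := by
      obtain ⟨s, hs0, hcard⟩ := (IsPGroup.nontrivial_iff_card hNp).mp ‹Nontrivial ↥N›
      rw [hcard]
      exact dvd_pow_self p hs0.ne'
    letI : MulAction ↥(P : Subgroup G) ↥N := MulAction.compHom ↥N (MulAut.conjNormal : ↥(P : Subgroup G) →* MulAut ↥N)
    have h1fix : (1 : ↥N) ∈ MulAction.fixedPoints ↥(P : Subgroup G) ↥N := by
      intro g
      show (MulAut.conjNormal (g : ↥(P : Subgroup G))) (1 : ↥N) = 1
      exact map_one _
    obtain ⟨b, hbfix, hb1⟩ :=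
      IsPGroup.exists_fixed_point_of_prime_dvd_card_of_fixed_point P.2 (α := ↥N) hpdvd h1fix
    set z : G := ((b : ↥(P : Subgroup G)) : G) with hzdef
    have hz1 : z ≠ 1 := by
      intro hcon
      apply hb1
      have h1 : (b : ↥(P : Subgroup G)) = 1 := Subtype.ext hcon
      exact (Subtype.ext h1).symm
    have hzP : ∀ g ∈ (P : Subgroup G), z * g = g * z := by
      intro g hg
      have h3 : (⟨g, hg⟩ : ↥(P : Subgroup G)) • b = b := hbfix ⟨g, hg⟩
      have h4 : (MulAut.conjNormal (⟨g, hg⟩ : ↥(P : Subgroup G))) b = b := h3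
      have h5 := congrArg (fun w : ↥N => (w : ↥(P : Subgroup G))) h4
      simp only [MulAut.conjNormal_apply] at h5
      have h6 := congrArg (fun w : ↥(P : Subgroup G) => (w : G)) h5
      simp only [Subgroup.coe_mul, Subgroup.coe_inv] at h6
      -- h6 : g * z * g⁻¹ = z
      rw [← hzdef] at h6
      calc z * g = (g * z * g⁻¹) * g := by rw [h6]
        _ = g * z := by group
    have hzC : z ∈ C := Subgroup.mem_subgroupOf.mp b.2
    -- K ⊔ P = ⊤
    set J : Subgroup G := K ⊔ (P : Subgroup G) with hJdef
    have hJtop : J = ⊤ := by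
      have h1 : J.index ∣ (P : Subgroup G).index :=
        Subgroup.index_dvd_of_le le_sup_right
      have hnp : ¬ p ∣ (P : Subgroup G).index := P.not_dvd_index
      have h2 : (J.map (QuotientGroup.mk' K)).index = J.index := by
        refine Subgroup.index_map_eq _ (QuotientGroup.mk'_surjective K) ?_
        rw [QuotientGroup.ker_mk']
        exact le_sup_left
      obtain ⟨t, ht⟩ := IsPGroup.iff_card.mp hGK
      have h3 : (J.map (QuotientGroup.mk' K)).index ∣ p ^ t := by
        rw [← ht]
        exact Subgroup.index_dvd_card _
      rw [h2] at h3
      obtain ⟨i, hile, hii⟩ := (Nat.dvd_prime_pow hp).mp h3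
      have hi0 : i = 0 := by
        by_contra h0
        apply hnp
        apply dvd_trans _ h1
        rw [hii]
        exact dvd_pow_self p h0
      rw [hi0, pow_zero] at hii
      exact Subgroup.index_eq_one.mp hii
    have hzZ : z ∈ Subgroup.center G := by
      rw [Subgroup.mem_center_iff]
      have hsub : (⊤ : Subgroup G) ≤ Subgroup.centralizer {z} := by
        rw [← hJtop, hJdef]
        apply sup_le
        · intro g hg
          rw [Subgroup.mem_centralizer_iff]
          intro h hh
          rw [Set.mem_singleton_iff] at hh
          subst hh
          exact ((Subgroup.mem_centralizer_iff.mp hzC) g hg).symm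
        · intro g hg
          rw [Subgroup.mem_centralizer_iff]
          intro h hh
          rw [Set.mem_singleton_iff] at hh
          subst hh
          exact hzP g hg
      intro g
      have := hsub (Subgroup.mem_top g)
      rw [Subgroup.mem_centralizer_iff] at this
      exact (this z rfl).symm
    -- pass to the quotient by the center
    haveI : Nontrivial (Subgroup.center G) :=
      ⟨⟨⟨z, hzZ⟩, 1, by simp [Subtype.ext_iff, hz1]⟩⟩
    have hqlt : Nat.card (G ⧸ Subgroup.center G) < Nat.card G := by
      have heq := Subgroup.card_eq_card_quotient_mul_card_subgroup (Subgroup.center G)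
      have hqpos : 0 < Nat.card (G ⧸ Subgroup.center G) := Nat.card_pos
      have h2 : 1 < Nat.card (Subgroup.center G) := Finite.one_lt_card
      calc Nat.card (G ⧸ Subgroup.center G)
          < Nat.card (G ⧸ Subgroup.center G) * Nat.card (Subgroup.center G) := by
            exact (Nat.lt_mul_iff_one_lt_right hqpos).mpr h2
        _ = Nat.card G := heq.symm
    have hqle : Nat.card (G ⧸ Subgroup.center G) ≤ n := by omega
    have hxq : ((x : G ⧸ Subgroup.center G)) ^ p ^ k = 1 := by
      rw [← QuotientGroup.mk_pow, hxo]
      rfl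
    have hcq : ∀ ybar : G ⧸ Subgroup.center G, ¬ p ∣ orderOf ybar →
        Commute (x : G ⧸ Subgroup.center G) ybar := by
      intro ybar hyp
      obtain ⟨g, rfl⟩ := QuotientGroup.mk_surjective ybar
      have ho0 : orderOf g ≠ 0 := (orderOf_pos g).ne'
      have hdvd : orderOf g ∣ p ^ ((orderOf g).factorization p) * ordCompl[p] (orderOf g) := by
        rw [Nat.ordProj_mul_ordCompl_eq_self]
      have hcop := Nat.Coprime.pow_left ((orderOf g).factorization p)
        (Nat.coprime_ordCompl hp ho0)
      obtain ⟨uu, vv, hu, hv, hguv, hup, hvm⟩ := aux_split g hdvd hcop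
      have hxv : Commute x vv := by
        apply hc
        intro hpv
        have : orderOf vv ∣ ordCompl[p] (orderOf g) := orderOf_dvd_iff_pow_eq_one.mpr hvm
        exact Nat.not_dvd_ordCompl hp ho0 (hpv.trans this)
      have humem : (uu : G ⧸ Subgroup.center G) ∈ zpowers ((g : G ⧸ Subgroup.center G)) := by
        obtain ⟨t, rfl⟩ := hu
        exact ⟨t, by push_cast; rfl⟩
      have hu1 : (uu : G ⧸ Subgroup.center G) = 1 := by
        have hd1 : orderOf (uu : G ⧸ Subgroup.center G) ∣ p ^ ((orderOf g).factorization p) := by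
          apply orderOf_dvd_iff_pow_eq_one.mpr
          rw [← QuotientGroup.mk_pow, hup]
          rfl
        have hd2 : orderOf (uu : G ⧸ Subgroup.center G) ∣ orderOf ((g : G ⧸ Subgroup.center G)) :=
          orderOf_dvd_of_mem_zpowers humem
        have hcop2 : Nat.Coprime (p ^ ((orderOf g).factorization p))
            (orderOf ((g : G ⧸ Subgroup.center G))) :=
          Nat.Coprime.pow_left _ ((Nat.Prime.coprime_iff_not_dvd hp).mpr hyp)
        have := Nat.eq_one_of_dvd_coprimes hcop2 hd1 hd2
        exact orderOf_eq_one_iff.mp this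
      have hgv : (g : G ⧸ Subgroup.center G) = (vv : G ⧸ Subgroup.center G) := by
        rw [hguv, QuotientGroup.mk_mul, hu1, one_mul]
      rw [hgv]
      exact hxv.map (QuotientGroup.mk' (Subgroup.center G))
    obtain ⟨m', hm'⟩ := ih (G ⧸ Subgroup.center G) hqle p hp
      (x : G ⧸ Subgroup.center G) k hxq hcq
    refine ⟨m' + 1, ?_⟩
    rw [← Subgroup.comap_upperCentralSeries_quotient_center]
    exact hm'

end NilpotentHypercentreAux2

section NilpotentHypercentreAux3
open Subgroup
variable {G : Type u} [Group G]
lemma aux_hyper [Finite G] :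
    ∀ (n : ℕ) (x : G), orderOf x ≤ n →
    (∀ y : G, Group.IsNilpotent (Subgroup.closure ({x, y} : Set G))) →
    ∃ k, x ∈ Subgroup.upperCentralSeries G k := by
  intro n
  induction n using Nat.strong_induction_on with
  | _ n ih =>
    intro x hxn hx
    rcases eq_or_ne x 1 with rfl | hx1
    · exact ⟨0, by rw [Subgroup.upperCentralSeries_zero, Subgroup.mem_bot]⟩
    have ho1 : orderOf x ≠ 1 := by simpa [orderOf_eq_one_iff] using hx1
    have ho0 : orderOf x ≠ 0 := (orderOf_pos x).ne'
    have hqp : (orderOf x).minFac.Prime := Nat.minFac_prime ho1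
    set o := orderOf x with hodef
    set q := o.minFac with hqdef
    set a := o.factorization q with hadef
    set m := ordCompl[q] o with hmdef
    have hdvd : orderOf x ∣ q ^ a * m := by rw [Nat.ordProj_mul_ordCompl_eq_self]
    have hcop : Nat.Coprime (q ^ a) m := Nat.Coprime.pow_left a (Nat.coprime_ordCompl hqp ho0)
    obtain ⟨u, v, hu, hv, hxuv, huq, hvm⟩ := aux_split x hdvd hcop
    have hdom : ∀ w : G, w ∈ zpowers x →
        ∀ y : G, Group.IsNilpotent (Subgroup.closure ({w, y} : Set G)) := by
      intro w hw y
      have hwmem : w ∈ Subgroup.closure ({x, y} : Set G) := by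
        obtain ⟨t, rfl⟩ := hw
        exact zpow_mem (Subgroup.subset_closure (by simp)) t
      have hle : Subgroup.closure ({w, y} : Set G) ≤ Subgroup.closure ({x, y} : Set G) := by
        refine (Subgroup.closure_le _).mpr ?_
        intro g hg
        simp only [Set.mem_insert_iff, Set.mem_singleton_iff] at hg
        rcases hg with h1 | h1
        · rw [h1]; exact hwmem
        · rw [h1]; exact Subgroup.subset_closure (by simp)
      exact aux_nilpotent_of_le hle (hx y)
    have hucomm : ∀ y : G, ¬ q ∣ orderOf y → Commute u y :=
      aux_commute_of_dominant u (hdom u hu) hqp huq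
    obtain ⟨k1, hk1⟩ := aux_pelem_hypercentral (Nat.card G) G le_rfl q hqp u a huq hucomm
    have hmpos : 0 < m := Nat.ordCompl_pos q ho0
    have hvo : orderOf v ∣ m := orderOf_dvd_iff_pow_eq_one.mpr hvm
    have hmlt : m < o := by
      rw [hmdef]
      apply Nat.div_lt_self (Nat.pos_of_ne_zero ho0)
      exact Nat.one_lt_pow (hqp.factorization_pos_of_dvd ho0 (Nat.minFac_dvd o)).ne' hqp.one_lt
    obtain ⟨k2, hk2⟩ := ih (orderOf v)
      (lt_of_le_of_lt (Nat.le_of_dvd hmpos hvo) (lt_of_lt_of_le hmlt hxn)) v le_rfl (hdom v hv)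
    refine ⟨max k1 k2, ?_⟩
    rw [hxuv]
    exact mul_mem (Subgroup.upperCentralSeries_mono G (le_max_left k1 k2) hk1)
      (Subgroup.upperCentralSeries_mono G (le_max_right k1 k2) hk2)

end NilpotentHypercentreAux3

/-- In a finite group `G`, the element `x` satisfies: `⟨x, y⟩` is nilpotent for
every `y ∈ G`, iff `x` lies in the hypercentre of `G` (some term of the upper central series). -/
theorem nilpotent_with_all_iff_mem_hypercentre (G : Type*) [Group G] [Finite G] (x : G) :
    (∀ y : G, Group.IsNilpotent (Subgroup.closure ({x, y} : Set G))) ↔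
    (∃ k : ℕ, x ∈ upperCentralSeries G k) := by
  constructor
  · intro h
    exact aux_hyper (orderOf x) x le_rfl h
  · rintro ⟨k, hk⟩ y
    have hxH : x ∈ Subgroup.closure ({x, y} : Set G) := Subgroup.subset_closure (by simp)
    have hyH : y ∈ Subgroup.closure ({x, y} : Set G) := Subgroup.subset_closure (by simp)
    have htop := aux_closure_pair x y
    have haH : (⟨x, hxH⟩ : Subgroup.closure ({x, y} : Set G)) ∈
        upperCentralSeries (Subgroup.closure ({x, y} : Set G)) k :=
      aux_mem_ucs_subgroup _ k ⟨x, hxH⟩ hk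
    exact aux_nilpotent_of_gen k (Subgroup.closure ({x, y} : Set G)) ⟨x, hxH⟩ ⟨y, hyH⟩ htop haH
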